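/- Let p(c, x₁) be a real polynomial of degree n ≥ 1 in c with Rₙ = Res(p, ∂p/∂c; c) not identically zero. Suppose Rₙ(β) ≠ 0 and the set C_β = {c ∈ ℝ : p(c, β) = 0} is empty. Then for every β' in the same connected component of ℝ \ Z(Rₙ) as β, the set C_{β'} is also empty; in particular there is no point (c, x₁) on the curve p = 0 with x₁ = β'. -/

import Mathlib

open Polynomial Filter

/-- The Sylvester matrix of `f` and `g`, viewed as polynomials of formal degrees
`m` and `k` respectively: `k` shifted rows of coefficients of `f` followed by
`m` shifted rows of coefficients of `g`. -/
noncomputable def sylvester {R : Type*} [CommRing R] (m k : ℕ) (f g : Polynomial R) :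
    Matrix (Fin (k + m)) (Fin (k + m)) R :=
  Matrix.of fun i j =>
    if (i : ℕ) < k then (if (i : ℕ) ≤ (j : ℕ) then f.coeff ((j : ℕ) - (i : ℕ)) else 0)
    else (if (i : ℕ) - k ≤ (j : ℕ) then g.coeff ((j : ℕ) - ((i : ℕ) - k)) else 0)

/-- The resultant of `f` and `g` with formal degrees `m` and `k`. -/
noncomputable def resultant {R : Type*} [CommRing R] (m k : ℕ) (f g : Polynomial R) : R :=
  (sylvester m k f g).det

/-- Evaluation at `(c, x)` of a bivariate polynomial `p ∈ ℝ[x][c]`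
(outer variable `c`, coefficients in `ℝ[x]`). -/
noncomputable def evalCX (c x : ℝ) (p : Polynomial (Polynomial ℝ)) : ℝ :=
  (p.map (Polynomial.evalRingHom x)).eval c

lemma sylvester_map {R S : Type*} [CommRing R] [CommRing S] (φ : R →+* S) (m k : ℕ)
    (f g : Polynomial R) :
    (sylvester m k f g).map φ = sylvester m k (f.map φ) (g.map φ) := by
  ext i j
  simp only [Matrix.map_apply, _root_.sylvester, Matrix.of_apply, Polynomial.coeff_map]
  split_ifs <;> simp

lemma resultant_map {R S : Type*} [CommRing R] [CommRing S] (φ : R →+* S) (m k : ℕ)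
    (f g : Polynomial R) :
    φ (resultant m k f g) = resultant m k (f.map φ) (g.map φ) := by
  rw [_root_.resultant, _root_.resultant, ← sylvester_map, RingHom.map_det, RingHom.mapMatrix_apply]

lemma lead_ne_zero (p : Polynomial (Polynomial ℝ)) (n : ℕ) (hn : 1 ≤ n) (hdeg : p.natDegree = n)
    (x : ℝ) (hx : (resultant n (n-1) p (derivative p)).eval x ≠ 0) :
    (p.coeff n).eval x ≠ 0 := by
  intro h0
  apply hx
  have hres : (resultant n (n-1) p (derivative p)).eval x
      = resultant n (n-1) (p.map (evalRingHom x)) ((derivative p).map (evalRingHom x)) :=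
    resultant_map (evalRingHom x) _ _ _ _
  rw [hres]
  have hcoeff : ∀ j, n ≤ j → (p.coeff j).eval x = 0 := by
    intro j hj
    rcases eq_or_lt_of_le hj with h | h
    · rw [← h]; exact h0
    · rw [p.coeff_eq_zero_of_natDegree_lt (hdeg ▸ h)]; simp
  have hsize : 0 < (n-1) + n := by omega
  apply Matrix.det_eq_zero_of_column_eq_zero ⟨(n-1)+n-1, by omega⟩
  intro i
  simp only [_root_.sylvester, Matrix.of_apply]
  split_ifs with h1 h2 h3
  · rw [Polynomial.coeff_map]
    have : n ≤ (n-1)+n-1 - (i:ℕ) := by omega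
    simp [coe_evalRingHom, hcoeff _ this]
  · rfl
  · rw [Polynomial.coeff_map, Polynomial.coeff_derivative]
    have : n ≤ ((n-1)+n-1 - ((i:ℕ) - (n-1))) + 1 := by
      have := i.isLt; omega
    simp [coe_evalRingHom, hcoeff _ this]
  · rfl

lemma row_sum (N i : ℕ) (hiN : i < N) (f : Polynomial ℝ) (hf : f.natDegree < N - i) (c : ℝ) :
    ∑ j ∈ Finset.range N, (if i ≤ j then f.coeff (j - i) else 0) * c ^ j
      = c ^ i * f.eval c := by
  rw [Finset.range_eq_Ico, ← Finset.sum_Ico_consecutive _ (Nat.zero_le i) (le_of_lt hiN)]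
  have h1 : ∑ j ∈ Finset.Ico 0 i, (if i ≤ j then f.coeff (j - i) else 0) * c ^ j = 0 := by
    apply Finset.sum_eq_zero
    intro j hj
    rw [Finset.mem_Ico] at hj
    rw [if_neg (by omega)]; ring
  rw [h1, zero_add, Finset.sum_Ico_eq_sum_range]
  have h2 : ∀ t ∈ Finset.range (N - i),
      (if i ≤ i + t then f.coeff (i + t - i) else 0) * c ^ (i + t) = c ^ i * (f.coeff t * c ^ t) := by
    intro t _
    rw [if_pos (Nat.le_add_right i t), Nat.add_sub_cancel_left, pow_add]; ring
  rw [Finset.sum_congr rfl h2, ← Finset.mul_sum, eval_eq_sum_range' hf]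

lemma sylvester_root (m k : ℕ) (hmk : 0 < k + m) (f g : Polynomial ℝ)
    (hf : f.natDegree ≤ m) (hg : g.natDegree ≤ k) (c : ℝ)
    (hfc : f.eval c = 0) (hgc : g.eval c = 0) :
    (sylvester m k f g).det = 0 := by
  rw [← Matrix.exists_mulVec_eq_zero_iff]
  refine ⟨fun j => c ^ (j : ℕ), ?_, ?_⟩
  · intro h
    have := congrFun h ⟨0, hmk⟩
    simp at this
  · funext i
    have : (sylvester m k f g).mulVec (fun j => c ^ (j:ℕ)) i
        = ∑ j ∈ Finset.range (k+m), (Matrix.of (fun a b : ℕ =>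
          if a < k then (if a ≤ b then f.coeff (b - a) else 0)
          else (if a - k ≤ b then g.coeff (b - (a - k)) else 0)) (i:ℕ) j) * c ^ j := by
      rw [Matrix.mulVec, dotProduct, ← Fin.sum_univ_eq_sum_range]
      rfl
    rw [this]
    by_cases hik : (i : ℕ) < k
    · have heq : ∀ j ∈ Finset.range (k+m), (Matrix.of (fun a b : ℕ =>
          if a < k then (if a ≤ b then f.coeff (b - a) else 0)
          else (if a - k ≤ b then g.coeff (b - (a - k)) else 0)) (i:ℕ) j) * c ^ j
          = (if (i:ℕ) ≤ j then f.coeff (j - (i:ℕ)) else 0) * c ^ j := by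
        intro j _; rw [Matrix.of_apply, if_pos hik]
      rw [Finset.sum_congr rfl heq, row_sum _ _ (by omega) _ (by omega) c, hfc]
      simp
    · have heq : ∀ j ∈ Finset.range (k+m), (Matrix.of (fun a b : ℕ =>
          if a < k then (if a ≤ b then f.coeff (b - a) else 0)
          else (if a - k ≤ b then g.coeff (b - (a - k)) else 0)) (i:ℕ) j) * c ^ j
          = (if (i:ℕ) - k ≤ j then g.coeff (j - ((i:ℕ) - k)) else 0) * c ^ j := by
        intro j _; rw [Matrix.of_apply, if_neg hik]
      have hi := i.isLt
      rw [Finset.sum_congr rfl heq, row_sum _ _ (by omega) _ (by omega) c, hgc]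
      simp

lemma deriv_ne_zero (p : Polynomial (Polynomial ℝ)) (n : ℕ) (hn : 1 ≤ n) (hdeg : p.natDegree = n)
    (x : ℝ) (hx : (resultant n (n-1) p (derivative p)).eval x ≠ 0)
    (c : ℝ) (hc : evalCX c x p = 0) :
    (derivative (p.map (evalRingHom x))).eval c ≠ 0 := by
  intro hd
  apply hx
  have hres : (resultant n (n-1) p (derivative p)).eval x
      = resultant n (n-1) (p.map (evalRingHom x)) ((derivative p).map (evalRingHom x)) :=
    resultant_map (evalRingHom x) _ _ _ _
  rw [hres, _root_.resultant]
  have hder : (derivative p).map (evalRingHom x) = derivative (p.map (evalRingHom x)) :=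
    (derivative_map p (evalRingHom x)).symm
  rw [hder]
  apply sylvester_root _ _ (by omega)
  · exact le_trans natDegree_map_le (le_of_eq hdeg)
  · calc (derivative (p.map (evalRingHom x))).natDegree
        ≤ (p.map (evalRingHom x)).natDegree - 1 := natDegree_derivative_le _
      _ ≤ n - 1 := by
          have h2 : (p.map (evalRingHom x)).natDegree ≤ p.natDegree := natDegree_map_le
          omega
  · exact hc
  · exact hd

noncomputable def Fb (p : Polynomial (Polynomial ℝ)) (n : ℕ) : ℝ × ℝ → ℝ :=
  fun z => ∑ i ∈ Finset.range (n+1), (p.coeff i).eval z.1 * z.2 ^ i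

lemma Fb_eq (p : Polynomial (Polynomial ℝ)) (n : ℕ) (hdeg : p.natDegree = n) (x c : ℝ) :
    evalCX c x p = Fb p n (x, c) := by
  unfold evalCX Fb
  have h : (p.map (evalRingHom x)).natDegree < n + 1 :=
    lt_of_le_of_lt (le_trans natDegree_map_le (le_of_eq hdeg)) (Nat.lt_succ_self n)
  rw [eval_eq_sum_range' h]
  exact Finset.sum_congr rfl fun i _ => by rw [coeff_map, coe_evalRingHom]

lemma Fb_cont (p : Polynomial (Polynomial ℝ)) (n : ℕ) : Continuous (Fb p n) := by
  unfold Fb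
  exact continuous_finset_sum _ fun i _ =>
    ((p.coeff i).continuous.comp continuous_fst).mul (continuous_snd.pow i)

lemma persist (p : Polynomial (Polynomial ℝ)) (n : ℕ) (hn : 1 ≤ n) (hdeg : p.natDegree = n)
    (x : ℝ) (hx : (resultant n (n-1) p (derivative p)).eval x ≠ 0)
    (c₀ : ℝ) (h0 : evalCX c₀ x p = 0) :
    ∀ᶠ y in nhds x, ∃ c, evalCX c y p = 0 := by
  set q := p.map (evalRingHom x) with hq
  have hroot : q.IsRoot c₀ := h0
  obtain ⟨h, hfac⟩ := dvd_iff_isRoot.mpr hroot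
  have hd : (derivative q).eval c₀ ≠ 0 := deriv_ne_zero p n hn hdeg x hx c₀ h0
  have hh : h.eval c₀ ≠ 0 := by
    rw [hfac, derivative_mul] at hd
    simpa using hd
  have hcont : Continuous fun c => h.eval c * h.eval c₀ := (h.continuous).mul continuous_const
  have hposat : 0 < h.eval c₀ * h.eval c₀ := mul_self_pos.mpr hh
  have hev : ∀ᶠ c in nhds c₀, 0 < h.eval c * h.eval c₀ :=
    (hcont.tendsto c₀).eventually (lt_mem_nhds hposat)
  rw [Metric.eventually_nhds_iff] at hev
  obtain ⟨δ, hδ, hball⟩ := hev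
  set c₁ := c₀ - δ/2 with hc₁
  set c₂ := c₀ + δ/2 with hc₂
  have hb1 : 0 < h.eval c₁ * h.eval c₀ := hball (by
    rw [Real.dist_eq, hc₁, show c₀ - δ/2 - c₀ = -(δ/2) by ring, abs_neg,
      abs_of_nonneg (by linarith)]; linarith)
  have hb2 : 0 < h.eval c₂ * h.eval c₀ := hball (by
    rw [Real.dist_eq, hc₂, show c₀ + δ/2 - c₀ = δ/2 by ring,
      abs_of_nonneg (by linarith)]; linarith)
  have hqc1 : q.eval c₁ = -(δ/2) * h.eval c₁ := by rw [hfac]; simp [hc₁]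
  have hqc2 : q.eval c₂ = (δ/2) * h.eval c₂ := by rw [hfac]; simp [hc₂]
  have hprodneg : Fb p n (x, c₁) * Fb p n (x, c₂) < 0 := by
    rw [← Fb_eq p n hdeg, ← Fb_eq p n hdeg]
    show evalCX c₁ x p * evalCX c₂ x p < 0
    have e1 : evalCX c₁ x p = q.eval c₁ := rfl
    have e2 : evalCX c₂ x p = q.eval c₂ := rfl
    rw [e1, e2, hqc1, hqc2]
    have h12 : 0 < h.eval c₁ * h.eval c₂ := by
      have heq : h.eval c₁ * h.eval c₂
          = (h.eval c₁ * h.eval c₀) * (h.eval c₂ * h.eval c₀) / (h.eval c₀ * h.eval c₀) := by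
        field_simp
      rw [heq]
      exact div_pos (mul_pos hb1 hb2) hposat
    have hpos : 0 < (δ/2) * (δ/2) * (h.eval c₁ * h.eval c₂) :=
      mul_pos (mul_pos (by linarith) (by linarith)) h12
    nlinarith
  have hGc : Continuous fun y => Fb p n (y, c₁) * Fb p n (y, c₂) :=
    ((Fb_cont p n).comp (continuous_id.prodMk continuous_const)).mul
      ((Fb_cont p n).comp (continuous_id.prodMk continuous_const))
  have hev2 : ∀ᶠ y in nhds x, Fb p n (y, c₁) * Fb p n (y, c₂) < 0 :=
    (hGc.tendsto x).eventually (gt_mem_nhds hprodneg)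
  refine hev2.mono fun y hy => ?_
  have hc12 : c₁ ≤ c₂ := by rw [hc₁, hc₂]; linarith
  have hFcont : ContinuousOn (fun c => Fb p n (y, c)) (Set.Icc c₁ c₂) :=
    ((Fb_cont p n).comp (continuous_const.prodMk continuous_id)).continuousOn
  rcases mul_neg_iff.mp hy with ⟨h1, h2⟩ | ⟨h1, h2⟩
  · have := intermediate_value_Icc' hc12 hFcont
    have h0mem : (0:ℝ) ∈ Set.Icc (Fb p n (y, c₂)) (Fb p n (y, c₁)) := ⟨le_of_lt h2, le_of_lt h1⟩
    obtain ⟨c, _, hc⟩ := this h0mem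
    exact ⟨c, by rw [Fb_eq p n hdeg]; exact hc⟩
  · have := intermediate_value_Icc hc12 hFcont
    have h0mem : (0:ℝ) ∈ Set.Icc (Fb p n (y, c₁)) (Fb p n (y, c₂)) := ⟨le_of_lt h1, le_of_lt h2⟩
    obtain ⟨c, _, hc⟩ := this h0mem
    exact ⟨c, by rw [Fb_eq p n hdeg]; exact hc⟩

lemma root_bound (p : Polynomial (Polynomial ℝ)) (n : ℕ) (hn : 1 ≤ n) (hdeg : p.natDegree = n)
    (a b : ℝ) (hab : a ≤ b)
    (hsub : ∀ x ∈ Set.Icc a b, (resultant n (n-1) p (derivative p)).eval x ≠ 0) :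
    ∃ B, ∀ x ∈ Set.Icc a b, ∀ c, evalCX c x p = 0 → |c| ≤ B := by
  have hne : (Set.Icc a b).Nonempty := Set.nonempty_Icc.mpr hab
  obtain ⟨x₀, hx₀, hmin⟩ := isCompact_Icc.exists_isMinOn hne
    ((p.coeff n).continuous.abs.continuousOn)
  set ε := |(p.coeff n).eval x₀| with hε
  have hεpos : 0 < ε := abs_pos.mpr (lead_ne_zero p n hn hdeg x₀ (hsub x₀ hx₀))
  obtain ⟨x₁, hx₁, hmax⟩ := isCompact_Icc.exists_isMaxOn hne
    ((continuous_finset_sum (Finset.range n) fun i _ => (p.coeff i).continuous.abs).continuousOn)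
  set M := ∑ i ∈ Finset.range n, |(p.coeff i).eval x₁| with hM
  refine ⟨max 1 (M / ε), ?_⟩
  intro x hx c hc
  by_cases hc1 : |c| ≤ 1
  · exact le_trans hc1 (le_max_left _ _)
  push_neg at hc1
  refine le_trans ?_ (le_max_right _ _)
  rw [Fb_eq p n hdeg] at hc
  unfold Fb at hc
  rw [Finset.sum_range_succ] at hc
  have hsum : (p.coeff n).eval x * c ^ n = -∑ i ∈ Finset.range n, (p.coeff i).eval x * c ^ i := by
    linarith [hc]
  have habs : ε * |c| ^ n ≤ M * |c| ^ (n - 1) := by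
    have h1 : ε * |c| ^ n ≤ |(p.coeff n).eval x| * |c| ^ n := by
      have := hmin hx
      simp only [Set.mem_setOf_eq] at this
      have hp : (0:ℝ) ≤ |c| ^ n := pow_nonneg (abs_nonneg c) n
      exact mul_le_mul_of_nonneg_right this hp
    have h2 : |(p.coeff n).eval x| * |c| ^ n
        = |∑ i ∈ Finset.range n, (p.coeff i).eval x * c ^ i| := by
      rw [← abs_pow, ← abs_mul, hsum, abs_neg]
    have h3 : |∑ i ∈ Finset.range n, (p.coeff i).eval x * c ^ i|
        ≤ ∑ i ∈ Finset.range n, |(p.coeff i).eval x| * |c| ^ (n-1) := by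
      refine le_trans (Finset.abs_sum_le_sum_abs _ _) (Finset.sum_le_sum fun i hi => ?_)
      rw [abs_mul, abs_pow]
      refine mul_le_mul_of_nonneg_left ?_ (abs_nonneg _)
      exact pow_le_pow_right₀ (le_of_lt hc1) (by
        have := Finset.mem_range.mp hi; omega)
    have h4 : ∑ i ∈ Finset.range n, |(p.coeff i).eval x| * |c| ^ (n-1)
        ≤ M * |c| ^ (n-1) := by
      rw [← Finset.sum_mul]
      refine mul_le_mul_of_nonneg_right ?_ (pow_nonneg (abs_nonneg c) _)
      have := hmax hx
      simpa using this
    linarith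
  have hpow : |c| ^ n = |c| * |c| ^ (n - 1) := by
    conv_lhs => rw [show n = (n-1) + 1 by omega]
    rw [pow_succ]
    ring
  rw [hpow] at habs
  have hppos : 0 < |c| ^ (n - 1) := pow_pos (by linarith) _
  rw [le_div_iff₀ hεpos]
  nlinarith

lemma key (p : Polynomial (Polynomial ℝ)) (n : ℕ) (hn : 1 ≤ n) (hdeg : p.natDegree = n)
    (a b : ℝ) (hab : a ≤ b)
    (hsub : ∀ x ∈ Set.Icc a b, (resultant n (n-1) p (derivative p)).eval x ≠ 0)
    (β β' : ℝ) (hβm : β ∈ Set.Icc a b) (hβ'm : β' ∈ Set.Icc a b)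
    (hempty : {c : ℝ | evalCX c β p = 0} = ∅) :
    {c : ℝ | evalCX c β' p = 0} = ∅ := by
  by_contra hne
  obtain ⟨c₀, hc₀⟩ := Set.nonempty_iff_ne_empty.mpr hne
  simp only [Set.mem_setOf_eq] at hc₀
  obtain ⟨B, hB⟩ := root_bound p n hn hdeg a b hab hsub
  set K : Set (ℝ × ℝ) := (Fb p n) ⁻¹' {0} ∩ (Set.Icc a b ×ˢ Metric.closedBall 0 B) with hK
  have hKcomp : IsCompact K :=
    (isCompact_Icc.prod (isCompact_closedBall 0 B)).inter_left
      (isClosed_singleton.preimage (Fb_cont p n))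
  have hCclosed : IsClosed (Prod.fst '' K) := (hKcomp.image continuous_fst).isClosed
  set U : Set ℝ := {y | ∀ᶠ z in nhds y, ∃ c, evalCX c z p = 0} with hU
  have hUopen : IsOpen U := isOpen_setOf_eventually_nhds
  set V : Set ℝ := (Prod.fst '' K)ᶜ with hV
  have hVopen : IsOpen V := hCclosed.isOpen_compl
  have hnotC : ∀ x : ℝ, ({c : ℝ | evalCX c x p = 0} = ∅) → x ∈ V := by
    intro x hx
    simp only [hV, Set.mem_compl_iff, Set.mem_image]
    rintro ⟨⟨z1, z2⟩, hz, rfl⟩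
    have : evalCX z2 z1 p = 0 := by
      have := hz.1
      simp only [Set.mem_preimage, Set.mem_singleton_iff] at this
      rw [Fb_eq p n hdeg]; exact this
    have : z2 ∈ {c : ℝ | evalCX c z1 p = 0} := this
    rw [hx] at this
    exact this
  have hcover : Set.Icc a b ⊆ U ∪ V := by
    intro x hx
    by_cases hroot : ∃ c, evalCX c x p = 0
    · obtain ⟨c, hc⟩ := hroot
      exact Or.inl (persist p n hn hdeg x (hsub x hx) c hc)
    · push_neg at hroot
      refine Or.inr (hnotC x ?_)
      ext c; simp [hroot c]
  have hUne : (Set.Icc a b ∩ U).Nonempty :=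
    ⟨β', hβ'm, persist p n hn hdeg β' (hsub β' hβ'm) c₀ hc₀⟩
  have hVne : (Set.Icc a b ∩ V).Nonempty := ⟨β, hβm, hnotC β hempty⟩
  obtain ⟨x, hxI, hxU, hxV⟩ := isPreconnected_Icc U V hUopen hVopen hcover hUne hVne
  obtain ⟨c, hc⟩ := hxU.self_of_nhds
  have hcB : |c| ≤ B := hB x hxI c hc
  apply hxV
  refine ⟨(x, c), ⟨?_, hxI, ?_⟩, rfl⟩
  · simp only [Set.mem_preimage, Set.mem_singleton_iff]
    rw [← Fb_eq p n hdeg]; exact hc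
  · simpa [Metric.mem_closedBall, Real.dist_eq] using hcB

theorem statement3 (p : Polynomial (Polynomial ℝ)) (n : ℕ) (hn : 1 ≤ n)
    (hdeg : p.natDegree = n)
    (R : Polynomial ℝ) (hRdef : R = resultant n (n - 1) p (Polynomial.derivative p))
    (hR0 : R ≠ 0)
    (β : ℝ) (hβ : R.eval β ≠ 0)
    (hempty : {c : ℝ | evalCX c β p = 0} = ∅)
    (β' : ℝ) (hβ' : β' ∈ connectedComponentIn {x : ℝ | R.eval x ≠ 0} β) :
    {c : ℝ | evalCX c β' p = 0} = ∅ := by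
  subst hRdef
  set S : Set ℝ := {x : ℝ | (resultant n (n-1) p (derivative p)).eval x ≠ 0} with hS
  have hβin : β ∈ connectedComponentIn S β := mem_connectedComponentIn hβ
  have hord : (connectedComponentIn S β).OrdConnected :=
    isPreconnected_connectedComponentIn.ordConnected
  have hsubS : connectedComponentIn S β ⊆ S := connectedComponentIn_subset _ _
  rcases le_total β β' with hle | hle
  · have hI : Set.Icc β β' ⊆ connectedComponentIn S β := hord.out hβin hβ'
    exact key p n hn hdeg β β' hle (fun x hx => hsubS (hI hx)) β β'
      ⟨le_refl β, hle⟩ ⟨hle, le_refl β'⟩ hempty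
  · have hI : Set.Icc β' β ⊆ connectedComponentIn S β := hord.out hβ' hβin
    exact key p n hn hdeg β' β hle (fun x hx => hsubS (hI hx)) β β'
      ⟨hle, le_refl β⟩ ⟨le_refl β', hle⟩ hempty
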